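/- Let $\mathcal{X}_i \subseteq \mathbb{R}^{n_i}$ be closed and convex, let $c > 0$, fix $x$, and let $f_i(\cdot, x^{-i})$, $f_{i,\eta}(\cdot, x^{-i})$ be convex functions on $\mathcal{X}_i$ satisfying $|f_i(v, x^{-i}) - f_{i,\eta}(v, x^{-i})| \le \eta\beta$ for all $v \in \mathcal{X}_i$. Let $B_i(x) = \arg\min_{v \in \mathcal{X}_i}[f_i(v, x^{-i}) + \tfrac{c}{2}\|v - x^i\|^2]$ and $B_{i,\eta}(x) = \arg\min_{v \in \mathcal{X}_i}[f_{i,\eta}(v, x^{-i}) + \tfrac{c}{2}\|v - x^i\|^2]$. Then $\|B_i(x) - B_{i,\eta}(x)\|^2 \le \frac{2\eta\beta}{c}$. -/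

import Mathlib

open Filter Topology

lemma combo_norm_sq {E : Type*} [NormedAddCommGroup E] [InnerProductSpace ℝ E]
    (a b : E) (t : ℝ) :
    ‖t • a + (1 - t) • b‖ ^ 2
      = t * ‖a‖ ^ 2 + (1 - t) * ‖b‖ ^ 2 - t * (1 - t) * ‖a - b‖ ^ 2 := by
  have h1 : ∀ x : E, ‖x‖ ^ 2 = (inner ℝ x x : ℝ) := fun x =>
    (real_inner_self_eq_norm_sq x).symm
  rw [h1, h1, h1, h1]
  simp only [inner_add_left, inner_add_right, inner_sub_left, inner_sub_right,
    inner_smul_left, inner_smul_right, RCLike.conj_to_real]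
  have : (inner ℝ a b : ℝ) = inner ℝ b a := real_inner_comm b a
  rw [this]
  ring

lemma strong_min {m : ℕ}
    (X : Set (EuclideanSpace ℝ (Fin m))) (hXcv : Convex ℝ X)
    (c : ℝ) (hc : 0 < c)
    (f : EuclideanSpace ℝ (Fin m) → ℝ) (xi : EuclideanSpace ℝ (Fin m))
    (hfconv : ConvexOn ℝ X f)
    (B : EuclideanSpace ℝ (Fin m)) (hBmem : B ∈ X)
    (hBopt : ∀ v ∈ X, f B + c / 2 * ‖B - xi‖^2 ≤ f v + c / 2 * ‖v - xi‖^2)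
    (v : EuclideanSpace ℝ (Fin m)) (hv : v ∈ X) :
    f B + c / 2 * ‖B - xi‖^2 + c / 2 * ‖v - B‖^2 ≤ f v + c / 2 * ‖v - xi‖^2 := by
  have key : ∀ t : ℝ, t ∈ Set.Ioo (0:ℝ) 1 →
      c / 2 * (1 - t) * ‖v - B‖^2 ≤ f v + c / 2 * ‖v - xi‖^2 - (f B + c / 2 * ‖B - xi‖^2) := by
    intro t ht
    obtain ⟨ht0, ht1⟩ := ht
    have hw : t • v + (1 - t) • B ∈ X := hXcv hv hBmem (le_of_lt ht0) (by linarith) (by ring)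
    have h2 := hBopt _ hw
    have h3 : f (t • v + (1 - t) • B) ≤ t * f v + (1 - t) * f B :=
      hfconv.2 hv hBmem (le_of_lt ht0) (by linarith) (by ring)
    have h4 : ‖t • v + (1 - t) • B - xi‖ ^ 2
        = t * ‖v - xi‖ ^ 2 + (1 - t) * ‖B - xi‖ ^ 2 - t * (1 - t) * ‖v - B‖ ^ 2 := by
      have heq : t • v + (1 - t) • B - xi = t • (v - xi) + (1 - t) • (B - xi) := by
        module
      rw [heq, combo_norm_sq]
      have : (v - xi) - (B - xi) = v - B := by abel
      rw [this]
    rw [h4] at h2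
    have hc2 : (0:ℝ) < c / 2 := by linarith
    nlinarith [h2, h3]
  have hne : (𝓝[Set.Ioo (0:ℝ) 1] 0).NeBot := by
    apply mem_closure_iff_nhdsWithin_neBot.mp
    rw [closure_Ioo (by norm_num : (0:ℝ) ≠ 1)]
    exact Set.mem_Icc.mpr ⟨le_refl 0, by norm_num⟩
  have htend : Filter.Tendsto (fun t : ℝ => c / 2 * (1 - t) * ‖v - B‖^2)
      (𝓝[Set.Ioo (0:ℝ) 1] 0) (𝓝 (c / 2 * ‖v - B‖^2)) := by
    have hcont : Continuous (fun t : ℝ => c / 2 * (1 - t) * ‖v - B‖^2) := by continuity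
    have := hcont.tendsto 0
    simp only [sub_zero, mul_one] at this
    exact this.mono_left nhdsWithin_le_nhds
  have := le_of_tendsto htend (eventually_nhdsWithin_of_forall key)
  linarith

/-- The proximal best-responses of f and its η-smoothing are 2ηβ/c-close. -/
theorem stmt_11 {m : ℕ}
    (X : Set (EuclideanSpace ℝ (Fin m))) (hXcl : IsClosed X) (hXcv : Convex ℝ X)
    (c η β : ℝ) (hc : 0 < c) (hη : 0 < η) (hβ : 0 < β)
    (f fη : EuclideanSpace ℝ (Fin m) → ℝ)
    (xi : EuclideanSpace ℝ (Fin m))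
    (hfconv : ConvexOn ℝ X f) (hfηconv : ConvexOn ℝ X fη)
    (hclose : ∀ v ∈ X, |f v - fη v| ≤ η * β)
    (B Bη : EuclideanSpace ℝ (Fin m))
    (hBmem : B ∈ X)
    (hBopt : ∀ v ∈ X, f B + c / 2 * ‖B - xi‖^2 ≤ f v + c / 2 * ‖v - xi‖^2)
    (hBηmem : Bη ∈ X)
    (hBηopt : ∀ v ∈ X, fη Bη + c / 2 * ‖Bη - xi‖^2 ≤ fη v + c / 2 * ‖v - xi‖^2) :
    ‖B - Bη‖^2 ≤ 2 * η * β / c := by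
  have h1 := strong_min X hXcv c hc f xi hfconv B hBmem hBopt Bη hBηmem
  have h2 := strong_min X hXcv c hc fη xi hfηconv Bη hBηmem hBηopt B hBmem
  have e1 := abs_le.mp (hclose B hBmem)
  have e2 := abs_le.mp (hclose Bη hBηmem)
  have hn : ‖Bη - B‖ = ‖B - Bη‖ := norm_sub_rev _ _
  rw [hn] at h1
  rw [le_div_iff₀ hc]
  nlinarith [h1, h2, e1.1, e1.2, e2.1, e2.2]
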